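/- Let C ⊆ ℝ^n be a nonempty compact convex set of diameter δ > 0 and let f : ℝ^n → ℝ be convex, differentiable, and L-smooth on C with L > 0. Let (x^t)_{t≥0} be a Frank-Wolfe sequence with short-step rule: x^0 ∈ C, and for every t there is v^t ∈ C with ⟨∇f(x^t), v^t⟩ = min_{v∈C} ⟨∇f(x^t), v⟩, and x^{t+1} = x^t + η^t(v^t − x^t) where η^t = min{1, ⟨∇f(x^t), x^t − v^t⟩ / (L‖x^t − v^t‖₂²)} if v^t ≠ x^t and η^t = 0 otherwise. Then for every t ≥ 1, f(x^t) − min_{x∈C} f(x) ≤ 2Lδ²/(t+2). -/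

import Mathlib

open RealInnerProductSpace

theorem grad_ineq {E : Type*} [NormedAddCommGroup E] [InnerProductSpace ℝ E] [CompleteSpace E]
    {C : Set E} {f : E → ℝ} (hconv : ConvexOn ℝ C f)
    {x y gx : E} (hx : x ∈ C) (hy : y ∈ C) (hg : HasGradientAt f gx x) :
    ⟪gx, y - x⟫ ≤ f y - f x := by
  set d := y - x with hd
  have hcurve : ∀ s : ℝ, HasDerivAt (fun s : ℝ => x + s • d) d s := by
    intro s
    simpa using ((hasDerivAt_id s).smul_const d).const_add x
  have hφ : HasDerivAt (fun s : ℝ => f (x + s • d)) ⟪gx, d⟫ 0 := by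
    have hg' : HasFDerivAt f ((InnerProductSpace.toDual ℝ E) gx) ((fun s : ℝ => x + s • d) 0) := by
      simpa using hg.hasFDerivAt
    have h := hg'.comp_hasDerivAt 0 (hcurve 0)
    simp only [Function.comp_def, InnerProductSpace.toDual_apply_apply] at h
    exact h
  have htend := hasDerivAt_iff_tendsto_slope.mp hφ
  have htend' : Filter.Tendsto (slope (fun s : ℝ => f (x + s • d)) 0)
      (nhdsWithin 0 (Set.Ioi 0)) (nhds ⟪gx, d⟫) :=
    htend.mono_left (nhdsWithin_mono _ (by intro s hs; exact ne_of_gt hs))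
  refine le_of_tendsto htend' ?_
  filter_upwards [Ioc_mem_nhdsGT_of_mem (Set.mem_Ico.mpr ⟨le_refl (0:ℝ), one_pos⟩)] with s hs
  obtain ⟨hs0, hs1⟩ := hs
  have hcomb := hconv.2 hx hy (show (0:ℝ) ≤ 1 - s by linarith) hs0.le (by ring)
  have hxs : (1 - s) • x + s • y = x + s • d := by rw [hd]; module
  rw [hxs] at hcomb
  rw [slope_def_field]
  simp only [zero_smul, add_zero, sub_zero]
  rw [div_le_iff₀ hs0]
  have hcomb' : f (x + s • d) ≤ (1 - s) * f x + s * f y := by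
    simpa [smul_eq_mul] using hcomb
  nlinarith

set_option maxHeartbeats 1000000 in
/-- Sublinear convergence of the Frank-Wolfe algorithm with the
short-step rule. -/
theorem fw_short_step_sublinear_convergence
    (n : ℕ) (C : Set (EuclideanSpace ℝ (Fin n)))
    (hCne : C.Nonempty) (hCcomp : IsCompact C) (hCconv : Convex ℝ C)
    (δ : ℝ) (hδ : 0 < δ) (hdiam : Metric.diam C = δ)
    (f : EuclideanSpace ℝ (Fin n) → ℝ)
    (g : EuclideanSpace ℝ (Fin n) → EuclideanSpace ℝ (Fin n))
    (L : ℝ) (hL : 0 < L)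
    (hconv : ConvexOn ℝ C f)
    (hgrad : ∀ x ∈ C, HasGradientAt f (g x) x)
    (hsmooth : ∀ x ∈ C, ∀ y ∈ C,
      f y ≤ f x + ⟪g x, y - x⟫ + L / 2 * ‖y - x‖ ^ 2)
    (x v : ℕ → EuclideanSpace ℝ (Fin n)) (η : ℕ → ℝ)
    (hx0 : x 0 ∈ C)
    (hvC : ∀ t, v t ∈ C)
    (hvmin : ∀ t, ∀ u ∈ C, ⟪g (x t), v t⟫ ≤ ⟪g (x t), u⟫)
    (hηstep : ∀ t, v t ≠ x t →
      η t = min 1 (⟪g (x t), x t - v t⟫ / (L * ‖x t - v t‖ ^ 2)))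
    (hηzero : ∀ t, v t = x t → η t = 0)
    (hupdate : ∀ t, x (t + 1) = x t + η t • (v t - x t)) :
    ∀ t : ℕ, 1 ≤ t → ∀ y ∈ C, f (x t) - f y ≤ 2 * L * δ ^ 2 / ((t : ℝ) + 2) := by
  have hxC : ∀ t, x t ∈ C := by
    intro t
    induction t with
    | zero => exact hx0
    | succ t ih =>
      have hη01 : 0 ≤ η t ∧ η t ≤ 1 := by
        by_cases hvx : v t = x t
        · rw [hηzero t hvx]; exact ⟨le_refl 0, zero_le_one⟩
        · rw [hηstep t hvx]
          refine ⟨le_min zero_le_one (div_nonneg ?_ ?_), min_le_left _ _⟩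
          · rw [inner_sub_right]; linarith [hvmin t (x t) ih]
          · positivity
      rw [hupdate t, show x t + η t • (v t - x t) = (1 - η t) • x t + η t • v t by module]
      exact hCconv ih (hvC t) (by linarith [hη01.2]) hη01.1 (by ring)
  have hG0 : ∀ t, 0 ≤ ⟪g (x t), x t - v t⟫ := by
    intro t; rw [inner_sub_right]; linarith [hvmin t (x t) (hxC t)]
  have hDδ : ∀ t, ‖x t - v t‖ ≤ δ := by
    intro t
    rw [← hdiam, ← dist_eq_norm]
    exact Metric.dist_le_diam_of_mem hCcomp.isBounded (hxC t) (hvC t)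
  have descent : ∀ t, f (x (t+1)) ≤
      f (x t) - η t * ⟪g (x t), x t - v t⟫ + L/2 * (η t)^2 * ‖x t - v t‖^2 := by
    intro t
    have h := hsmooth (x t) (hxC t) (x (t+1)) (hxC (t+1))
    have hdiff : x (t+1) - x t = η t • (v t - x t) := by rw [hupdate t]; abel
    rw [hdiff] at h
    have h1 : ⟪g (x t), η t • (v t - x t)⟫ = - (η t * ⟪g (x t), x t - v t⟫) := by
      rw [real_inner_smul_right, show v t - x t = -(x t - v t) by abel, inner_neg_right]; ring
    have h2 : ‖η t • (v t - x t)‖^2 = (η t)^2 * ‖x t - v t‖^2 := by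
      rw [norm_smul, Real.norm_eq_abs, norm_sub_rev, mul_pow, sq_abs]
    rw [h1, h2] at h
    linarith
  have hhG : ∀ t, ∀ y ∈ C, f (x t) - f y ≤ ⟪g (x t), x t - v t⟫ := by
    intro t y hy
    have h1 := grad_ineq hconv (hxC t) hy (hgrad (x t) (hxC t))
    have h1' : ⟪g (x t), y⟫ - ⟪g (x t), x t⟫ ≤ f y - f (x t) := by
      rw [← inner_sub_right]; exact h1
    rw [inner_sub_right]
    linarith [hvmin t y hy]
  have hKpos : 0 < L * δ^2 := by positivity
  have step : ∀ t, f (x (t+1)) ≤ f (x t) ∧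
      (∀ y ∈ C, f (x (t+1)) - f y ≤ L * δ^2 / 2) ∧
      (∀ y ∈ C, 0 ≤ f (x t) - f y → f (x t) - f y ≤ L * δ^2 →
        f (x (t+1)) - f y ≤ f (x t) - f y - (f (x t) - f y)^2 / (2 * L * δ^2)) := by
    intro t
    have hdesc := descent t
    have hGnn := hG0 t
    have hDd : ‖x t - v t‖^2 ≤ δ^2 := pow_le_pow_left₀ (norm_nonneg _) (hDδ t) 2
    set G := ⟪g (x t), x t - v t⟫ with hGdef
    set D := ‖x t - v t‖^2 with hDdef
    by_cases hvx : v t = x t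
    · have hxx : x (t+1) = x t := by rw [hupdate t, hηzero t hvx]; simp
      have hGz : G = 0 := by rw [hGdef, hvx]; simp
      refine ⟨by rw [hxx], ?_, ?_⟩
      · intro y hy
        have hle := hhG t y hy
        rw [← hGdef, hGz] at hle
        rw [hxx]
        nlinarith
      · intro y hy h0 h1
        have hle := hhG t y hy
        rw [← hGdef, hGz] at hle
        have heq : f (x t) - f y = 0 := le_antisymm hle h0
        rw [hxx, heq]
        norm_num
    · have hD0 : (0:ℝ) < D := by
        rw [hDdef]
        exact pow_pos (norm_pos_iff.mpr (sub_ne_zero_of_ne (Ne.symm hvx))) 2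
      have hη := hηstep t hvx
      rw [← hGdef, ← hDdef] at hη
      have hLD : (0:ℝ) < L * D := by positivity
      by_cases hcase : L * D ≤ G
      · have hη1 : η t = 1 := by
          rw [hη]; exact min_eq_left (by rw [le_div_iff₀ hLD]; linarith)
        rw [hη1] at hdesc
        have hdesc' : f (x (t+1)) ≤ f (x t) - G + L/2 * D := by nlinarith
        refine ⟨by linarith, ?_, ?_⟩
        · intro y hy
          have hle := hhG t y hy; rw [← hGdef] at hle
          nlinarith
        · intro y hy h0 h1
          have hle := hhG t y hy; rw [← hGdef] at hle
          have key : (f (x t) - f y)^2 / (2*L*δ^2) ≤ (f (x t) - f y) / 2 := by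
            rw [div_le_div_iff₀ (by positivity) (by norm_num)]
            nlinarith
          nlinarith
      · push_neg at hcase
        have hηval : η t = G / (L * D) := by
          rw [hη]; exact min_eq_right (by rw [div_le_one hLD]; linarith)
        rw [hηval] at hdesc
        have hcalc : - (G/(L*D)*G) + L/2 * (G/(L*D))^2 * D = - (G^2/(2*(L*D))) := by
          field_simp; ring
        have hdesc' : f (x (t+1)) ≤ f (x t) - G^2 / (2 * (L * D)) := by
          nlinarith [hcalc]
        have hq : 0 ≤ G^2 / (2*(L*D)) := by positivity
        have e1 : G^2/(2*(L*D)) * (2*(L*D)) = G^2 := div_mul_cancel₀ _ (by positivity)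
        refine ⟨by linarith, ?_, ?_⟩
        · intro y hy
          have hle := hhG t y hy; rw [← hGdef] at hle
          have h2 : G - G^2/(2*(L*D)) ≤ L*D/2 := by
            nlinarith [sq_nonneg (G - L*D)]
          nlinarith
        · intro y hy h0 h1
          have hle := hhG t y hy; rw [← hGdef] at hle
          have hsq : (f (x t) - f y)^2 ≤ G^2 := by nlinarith
          have hden : (0:ℝ) < 2*(L*D) := by positivity
          have hden2 : 2*(L*D) ≤ 2*L*δ^2 := by nlinarith
          have hmono : (f (x t) - f y)^2 / (2*L*δ^2) ≤ G^2 / (2*(L*D)) :=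
            div_le_div₀ (sq_nonneg G) hsq hden hden2
          linarith
  intro t ht
  induction t, ht using Nat.le_induction with
  | base =>
    intro y hy
    have hb := (step 0).2.1 y hy
    have : L * δ^2 / 2 ≤ 2*L*δ^2/3 := by
      rw [div_le_div_iff₀ (by norm_num) (by norm_num)]; nlinarith
    push_cast
    norm_num
    linarith
  | succ t ht ih =>
    intro y hy
    have ihy := ih y hy
    have hct : (0:ℝ) < (t:ℝ) + 2 := by positivity
    by_cases hsign : f (x t) - f y ≤ 0
    · have hmon := (step t).1
      have hb : (0:ℝ) ≤ 2*L*δ^2/((t:ℝ)+1+2) := by positivity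
      push_cast
      linarith
    · push_neg at hsign
      have h0 : 0 ≤ f (x t) - f y := hsign.le
      have htR : (1:ℝ) ≤ (t:ℝ) := by exact_mod_cast ht
      have hcK : 2*L*δ^2/((t:ℝ)+2) ≤ L*δ^2 := by
        rw [div_le_iff₀ hct]; nlinarith
      have h1 : f (x t) - f y ≤ L*δ^2 := le_trans ihy hcK
      have hstep := (step t).2.2 y hy h0 h1
      set c : ℝ := 2*L*δ^2/((t:ℝ)+2) with hc
      set h : ℝ := f (x t) - f y with hh
      have e1 : h^2/(2*L*δ^2) * (2*L*δ^2) = h^2 := div_mul_cancel₀ _ (by positivity)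
      have e2 : c^2/(2*L*δ^2) * (2*L*δ^2) = c^2 := div_mul_cancel₀ _ (by positivity)
      have hP : 0 ≤ (c - h) * (2*L*δ^2 - (c + h)) :=
        mul_nonneg (by linarith) (by linarith)
      have hmono : h - h^2/(2*L*δ^2) ≤ c - c^2/(2*L*δ^2) := by
        nlinarith
      have hkey : c - c^2/(2*L*δ^2) = 2*L*δ^2 * ((t:ℝ)+1)/((t:ℝ)+2)^2 := by
        rw [hc]; field_simp; ring
      have hlast : 2*L*δ^2 * ((t:ℝ)+1)/((t:ℝ)+2)^2 ≤ 2*L*δ^2/((t:ℝ)+1+2) := by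
        rw [div_le_div_iff₀ (by positivity) (by positivity)]
        nlinarith
      push_cast
      linarith [hstep, hmono, hkey.le, hkey.ge, hlast]
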